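/- Let K be a field of characteristic ≠ 2 and c, d ∈ K nonzero. The generalized quaternion algebra D = (c,d) with basis {1, i, j, k}, relations i² = −c, j² = −d, ij = −ji = k, is a division ring if and only if the quadratic form Q(x₀,x₁,x₂,x₃) = x₀² + c x₁² + d x₂² + cd x₃² has only the trivial zero over K. -/
import Mathlib


open Quaternion

lemma mul_star_aux {K : Type*} [Field K] {c d : K} (a : ℍ[K, -c, -d]) :
    a * star a =
      ((a.re ^ 2 + c * a.imI ^ 2 + d * a.imJ ^ 2 + c * d * a.imK ^ 2 : K) : ℍ[K, -c, -d]) := by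
  ext <;> simp [sq] <;> ring

/-- over a field `K` of characteristic ≠ 2 with `c, d ≠ 0`, the
generalized quaternion algebra `(c,d)` (with `i² = −c`, `j² = −d`, `ij = −ji`)
is a division ring iff the quadratic form
`x₀² + c x₁² + d x₂² + cd x₃²` has only the trivial zero over `K`. -/
theorem stmt8 (K : Type*) [Field K] (h2 : (2 : K) ≠ 0) (c d : K)
    (hc : c ≠ 0) (hd : d ≠ 0) :
    (∀ a : ℍ[K, -c, -d], a ≠ 0 → IsUnit a) ↔
      (∀ x₀ x₁ x₂ x₃ : K,
        x₀ ^ 2 + c * x₁ ^ 2 + d * x₂ ^ 2 + c * d * x₃ ^ 2 = 0 →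
        x₀ = 0 ∧ x₁ = 0 ∧ x₂ = 0 ∧ x₃ = 0) := by
  constructor
  · intro hdiv x₀ x₁ x₂ x₃ hQ
    by_contra h
    have ha : (⟨x₀, x₁, x₂, x₃⟩ : ℍ[K, -c, -d]) ≠ 0 := by
      intro h0
      apply h
      have := congrArg QuaternionAlgebra.re h0
      have h1 := congrArg QuaternionAlgebra.imI h0
      have h2' := congrArg QuaternionAlgebra.imJ h0
      have h3 := congrArg QuaternionAlgebra.imK h0
      exact ⟨this, h1, h2', h3⟩
    have hu := hdiv _ ha
    have hstar : (⟨x₀, x₁, x₂, x₃⟩ : ℍ[K, -c, -d]) * star ⟨x₀, x₁, x₂, x₃⟩ = 0 := by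
      rw [mul_star_aux]
      simp only [hQ]
      exact QuaternionAlgebra.coe_zero
    have : star (⟨x₀, x₁, x₂, x₃⟩ : ℍ[K, -c, -d]) = 0 :=
      hu.mul_left_cancel (hstar.trans (mul_zero _).symm)
    apply ha
    have := congrArg star this
    simpa using this
  · intro hQ a ha
    set n : K := a.re ^ 2 + c * a.imI ^ 2 + d * a.imJ ^ 2 + c * d * a.imK ^ 2 with hn
    have hn0 : n ≠ 0 := by
      intro h0
      obtain ⟨h1, h2', h3, h4⟩ := hQ _ _ _ _ h0
      exact ha (by ext <;> assumption)
    rw [isUnit_iff_exists]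
    refine ⟨n⁻¹ • star a, ?_, ?_⟩
    · rw [mul_smul_comm, mul_star_aux, ← hn, QuaternionAlgebra.smul_coe,
        inv_mul_cancel₀ hn0, QuaternionAlgebra.coe_one]
    · rw [smul_mul_assoc, star_comm_self', mul_star_aux, ← hn, QuaternionAlgebra.smul_coe,
        inv_mul_cancel₀ hn0, QuaternionAlgebra.coe_one]
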